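/- Let f : ℝ → ℝ be continuously differentiable, let u₋ ≠ u₊, and set λ̄ := ā(u₋, u₊). Assume the discontinuity (u₋, u₊) is entropy admissible in the sense of Oleinik: ā(u₋, w) ≥ λ̄ for every w strictly between u₋ and u₊. Then for EVERY constant v ∈ ℝ, the discontinuity of the averaged coefficient ā(·, v) (with left value ā₋ := ā(u₋, v), right value ā₊ := ā(u₊, v), propagating at speed λ̄) is NOT a rarefaction-shock except in the fully degenerate case; precisely, it is never the case that both ā₋ ≤ λ̄ ≤ ā₊ and ā₋ < ā₊ hold. -/

import Mathlib

open Set Filter Topology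

/-- The averaged speed `ā(a,b) := ∫₀¹ f'(a + θ(b − a)) dθ`. -/
noncomputable def abar (f : ℝ → ℝ) (a b : ℝ) : ℝ :=
  ∫ θ in (0:ℝ)..1, deriv f (a + θ * (b - a))

lemma abar_mul (f : ℝ → ℝ) (hf : ContDiff ℝ 1 f) (a b : ℝ) :
    abar f a b * (b - a) = f b - f a := by
  have hd := hf.differentiable one_ne_zero
  have hderiv : ∀ θ ∈ Set.uIcc (0:ℝ) 1,
      HasDerivAt (fun t => f (a + t * (b - a))) (deriv f (a + θ * (b - a)) * (b - a)) θ := by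
    intro θ _
    have h1 : HasDerivAt (fun t : ℝ => a + t * (b - a)) (b - a) θ := by
      simpa using ((hasDerivAt_id θ).mul_const (b - a)).const_add a
    exact (hd _).hasDerivAt.comp θ h1
  have hcont : Continuous fun θ : ℝ => deriv f (a + θ * (b - a)) * (b - a) := by
    exact ((hf.continuous_deriv le_rfl).comp (by continuity)).mul continuous_const
  have := intervalIntegral.integral_eq_sub_of_hasDerivAt hderiv (hcont.intervalIntegrable 0 1)
  simpa [abar, intervalIntegral.integral_mul_const] using this

lemma abar_self (f : ℝ → ℝ) (a : ℝ) : abar f a a = deriv f a := by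
  simp [abar]

lemma abar_slope (f : ℝ → ℝ) (hf : ContDiff ℝ 1 f) {a b : ℝ} (h : a ≠ b) :
    abar f a b = slope f a b := by
  have := abar_mul f hf a b
  have hb : b - a ≠ 0 := sub_ne_zero.2 (Ne.symm h)
  rw [slope_def_field]
  field_simp
  linarith [this]

lemma tendsto_abar (f : ℝ → ℝ) (hf : ContDiff ℝ 1 f) (x : ℝ) :
    Tendsto (fun w => abar f x w) (𝓝[≠] x) (𝓝 (deriv f x)) := by
  have hs : Tendsto (slope f x) (𝓝[≠] x) (𝓝 (deriv f x)) :=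
    hasDerivAt_iff_tendsto_slope.1 ((hf.differentiable one_ne_zero) x).hasDerivAt
  refine hs.congr' ?_
  filter_upwards [self_mem_nhdsWithin] with w hw
  exact (abar_slope f hf (Ne.symm hw)).symm

/-- **Fundamental property for scalar equations.** If the discontinuity `(u₋, u₊)`
is entropy admissible in the sense of Oleinik (`ā(u₋,w) ≥ λ̄` for all `w` strictly
between `u₋` and `u₊`), then for every constant `v` the discontinuity of the averaged
coefficient `ā(·,v)` is not a (non-degenerate) rarefaction-shock: it is never the
case that both `ā₋ ≤ λ̄ ≤ ā₊` and `ā₋ < ā₊` hold. -/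
theorem stmt_12 (f : ℝ → ℝ) (hf : ContDiff ℝ 1 f)
    (um up : ℝ) (hne : um ≠ up)
    (lam : ℝ) (hlam : lam = abar f um up)
    (hOleinik : ∀ w : ℝ, (w - um) * (w - up) < 0 → abar f um w ≥ lam) :
    ∀ v : ℝ, ¬ (abar f um v ≤ lam ∧ lam ≤ abar f up v ∧ abar f um v < abar f up v) := by
  have key : lam * (up - um) = f up - f um := by
    rw [hlam]; exact abar_mul f hf um up
  -- derived downstream Oleinik inequality
  have hupw : ∀ w : ℝ, (w - um) * (w - up) < 0 → abar f up w ≤ lam := by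
    intro w hw
    have h1 := hOleinik w hw
    have e1 : abar f um w * (w - um) = f w - f um := abar_mul f hf um w
    have e2 : abar f up w * (w - up) = f w - f up := abar_mul f hf up w
    rcases mul_neg_iff.1 hw with ⟨hwa, hwb⟩ | ⟨hwa, hwb⟩
    · nlinarith [mul_nonneg (sub_nonneg.2 h1) hwa.le]
    · nlinarith [mul_nonpos_of_nonneg_of_nonpos (sub_nonneg.2 h1) hwa.le]
  intro v
  rintro ⟨h1, h2, h3⟩
  by_cases hvm : v = um
  · -- v = um : left value is f'(um), right value is lam
    subst hvm
    have haup : abar f up v = lam := by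
      have e := abar_mul f hf up v
      have : lam * (v - up) = f v - f up := by linarith [key]
      have hvu : v - up ≠ 0 := sub_ne_zero.2 hne
      have : (abar f up v - lam) * (v - up) = 0 := by linarith [e]
      rcases mul_eq_zero.1 this with h | h
      · linarith
      · exact absurd h hvu
    have hself : abar f v v = deriv f v := abar_self f v
    -- show lam ≤ deriv f v
    have hge : lam ≤ deriv f v := by
      rcases lt_or_gt_of_ne hne with hlt | hgt
      · -- v < up, use right filter
        have ht : Tendsto (fun w => abar f v w) (𝓝[>] v) (𝓝 (deriv f v)) :=
          (tendsto_abar f hf v).mono_left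
            (nhdsWithin_mono v (fun x hx => mem_compl_singleton_iff.2 (ne_of_gt hx)))
        refine ge_of_tendsto ht ?_
        filter_upwards [Ioo_mem_nhdsGT_of_mem ⟨le_refl v, hlt⟩] with w hw
        exact hOleinik w (mul_neg_of_pos_of_neg (by linarith [hw.1]) (by linarith [hw.2]))
      · have ht : Tendsto (fun w => abar f v w) (𝓝[<] v) (𝓝 (deriv f v)) :=
          (tendsto_abar f hf v).mono_left
            (nhdsWithin_mono v (fun x hx => mem_compl_singleton_iff.2 (ne_of_lt hx)))
        refine ge_of_tendsto ht ?_
        filter_upwards [Ioo_mem_nhdsLT_of_mem ⟨hgt, le_refl v⟩] with w hw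
        exact hOleinik w (mul_neg_of_neg_of_pos (by linarith [hw.2]) (by linarith [hw.1]))
    rw [hself] at h3
    rw [haup] at h3
    linarith
  · by_cases hvp : v = up
    · -- v = up : left value is lam, right value is f'(up)
      subst hvp
      have haum : abar f um v = lam := hlam.symm
      have hself : abar f v v = deriv f v := abar_self f v
      have hle : deriv f v ≤ lam := by
        rcases lt_or_gt_of_ne hne with hlt | hgt
        · -- um < v, approach from the left
          have ht : Tendsto (fun w => abar f v w) (𝓝[<] v) (𝓝 (deriv f v)) :=
            (tendsto_abar f hf v).mono_left
              (nhdsWithin_mono v (fun x hx => mem_compl_singleton_iff.2 (ne_of_lt hx)))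
          refine le_of_tendsto ht ?_
          filter_upwards [Ioo_mem_nhdsLT_of_mem ⟨hlt, le_refl v⟩] with w hw
          exact hupw w (mul_neg_of_pos_of_neg (by linarith [hw.1]) (by linarith [hw.2]))
        · have ht : Tendsto (fun w => abar f v w) (𝓝[>] v) (𝓝 (deriv f v)) :=
            (tendsto_abar f hf v).mono_left
              (nhdsWithin_mono v (fun x hx => mem_compl_singleton_iff.2 (ne_of_gt hx)))
          refine le_of_tendsto ht ?_
          filter_upwards [Ioo_mem_nhdsGT_of_mem ⟨le_refl v, hgt⟩] with w hw
          exact hupw w (mul_neg_of_neg_of_pos (by linarith [hw.2]) (by linarith [hw.1]))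
      rw [haum] at h3
      rw [hself] at h3
      linarith
    · -- v ≠ um, v ≠ up
      have e1 : abar f um v * (v - um) = f v - f um := abar_mul f hf um v
      have e2 : abar f up v * (v - up) = f v - f up := abar_mul f hf up v
      have hAB : (lam - abar f um v) * (v - um) + (abar f up v - lam) * (v - up) = 0 := by
        nlinarith [e1, e2, key]
      have hvum : v - um ≠ 0 := sub_ne_zero.2 hvm
      have hvup : v - up ≠ 0 := sub_ne_zero.2 hvp
      rcases lt_trichotomy ((v - um) * (v - up)) 0 with hb | hb | hb
      · -- v strictly between
        have hO := hOleinik v hb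
        have ha : abar f um v = lam := le_antisymm h1 hO
        rw [ha] at hAB
        simp at hAB
        rcases hAB with h | h
        · linarith [ha, h3]
        · exact absurd h hvup
      · rcases mul_eq_zero.1 hb with h | h
        · exact absurd h hvum
        · exact absurd h hvup
      · rcases mul_pos_iff.1 hb with ⟨hP, hQ⟩ | ⟨hP, hQ⟩
        · have t1 : 0 ≤ (lam - abar f um v) * (v - um) :=
            mul_nonneg (by linarith) hP.le
          have t2 : 0 ≤ (abar f up v - lam) * (v - up) :=
            mul_nonneg (by linarith) hQ.le
          have z1 : (lam - abar f um v) * (v - um) = 0 := by linarith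
          have z2 : (abar f up v - lam) * (v - up) = 0 := by linarith
          have a1 : abar f um v = lam := by
            rcases mul_eq_zero.1 z1 with h | h
            · linarith
            · exact absurd h hvum
          have a2 : abar f up v = lam := by
            rcases mul_eq_zero.1 z2 with h | h
            · linarith
            · exact absurd h hvup
          rw [a1, a2] at h3; exact lt_irrefl _ h3
        · have t1 : (lam - abar f um v) * (v - um) ≤ 0 :=
            mul_nonpos_iff.2 (Or.inl ⟨by linarith, hP.le⟩)
          have t2 : (abar f up v - lam) * (v - up) ≤ 0 :=
            mul_nonpos_iff.2 (Or.inl ⟨by linarith, hQ.le⟩)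
          have z1 : (lam - abar f um v) * (v - um) = 0 := by linarith
          have z2 : (abar f up v - lam) * (v - up) = 0 := by linarith
          have a1 : abar f um v = lam := by
            rcases mul_eq_zero.1 z1 with h | h
            · linarith
            · exact absurd h hvum
          have a2 : abar f up v = lam := by
            rcases mul_eq_zero.1 z2 with h | h
            · linarith
            · exact absurd h hvup
          rw [a1, a2] at h3; exact lt_irrefl _ h3
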